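/- Let N₁ be a real number with N₁ ≥ e^{e^{10}} and define recursively N_{k+1} := N_k + 10 log log N_k for k ≥ 1. Then N_M → ∞ as M → ∞, and liminf_{M → ∞} ( Σ_{k=1}^{M} 1/(N_k log N_k) ) / ( log log log N_M ) ≥ 1/10. -/

import Mathlib

open Filter Finset

private lemma log_sub_log_le {a b : ℝ} (hb : 0 < b) (hab : b ≤ a) :
    Real.log a - Real.log b ≤ (a - b) / b := by
  have ha : 0 < a := hb.trans_le hab
  have h := Real.log_le_sub_one_of_pos (show (0:ℝ) < a / b from div_pos ha hb)
  rw [Real.log_div (ne_of_gt ha) (ne_of_gt hb)] at h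
  have : a / b - 1 = (a - b) / b := by field_simp
  linarith [this ▸ h]

private lemma le_log_sub_log {a b : ℝ} (hb : 0 < b) (hab : b ≤ a) :
    (a - b) / a ≤ Real.log a - Real.log b := by
  have ha : 0 < a := hb.trans_le hab
  have h := Real.log_le_sub_one_of_pos (show (0:ℝ) < b / a from div_pos hb ha)
  rw [Real.log_div (ne_of_gt hb) (ne_of_gt ha)] at h
  have : b / a - 1 = -((a - b) / a) := by field_simp; ring
  linarith [this ▸ h]

private lemma E_pos : (0:ℝ) < Real.exp (Real.exp 10) := Real.exp_pos _

private lemma xpos {x : ℝ} (hx : Real.exp (Real.exp 10) ≤ x) : 0 < x := E_pos.trans_le hx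

private lemma log_ge {x : ℝ} (hx : Real.exp (Real.exp 10) ≤ x) : Real.exp 10 ≤ Real.log x := by
  have := Real.log_le_log (Real.exp_pos _) hx
  rwa [Real.log_exp] at this

private lemma log_pos' {x : ℝ} (hx : Real.exp (Real.exp 10) ≤ x) : 0 < Real.log x :=
  (Real.exp_pos _).trans_le (log_ge hx)

private lemma loglog_ge {x : ℝ} (hx : Real.exp (Real.exp 10) ≤ x) :
    10 ≤ Real.log (Real.log x) := by
  have := Real.log_le_log (Real.exp_pos _) (log_ge hx)
  rwa [Real.log_exp] at this

private lemma loglog_pos {x : ℝ} (hx : Real.exp (Real.exp 10) ≤ x) :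
    0 < Real.log (Real.log x) := lt_of_lt_of_le (by norm_num) (loglog_ge hx)

private lemma lll_ge {x : ℝ} (hx : Real.exp (Real.exp 10) ≤ x) :
    2 ≤ Real.log (Real.log (Real.log x)) := by
  have h10 : Real.exp 2 ≤ 10 := by
    have h := Real.exp_one_lt_d9
    have : Real.exp 2 = Real.exp 1 ^ 2 := by rw [Real.exp_one_pow]; norm_num
    nlinarith [Real.exp_pos 1]
  calc (2:ℝ) = Real.log (Real.exp 2) := (Real.log_exp 2).symm
    _ ≤ Real.log 10 := Real.log_le_log (Real.exp_pos _) h10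
    _ ≤ Real.log (Real.log (Real.log x)) :=
        Real.log_le_log (by norm_num) (loglog_ge hx)

private lemma x_ge_400 {x : ℝ} (hx : Real.exp (Real.exp 10) ≤ x) : 400 ≤ x := by
  have h1 : (11:ℝ) ≤ Real.exp 10 := by linarith [Real.add_one_le_exp (10:ℝ)]
  have h2 : Real.exp 11 ≤ Real.exp (Real.exp 10) := Real.exp_le_exp.2 h1
  have h3 : (400:ℝ) ≤ Real.exp 11 := by
    have h := Real.exp_one_gt_d9
    have he : Real.exp 11 = Real.exp 1 ^ 11 := by rw [Real.exp_one_pow]; norm_num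
    have hp : (2.7182818283:ℝ) ^ 11 ≤ Real.exp 1 ^ 11 :=
      pow_le_pow_left₀ (by norm_num) h.le 11
    have : (400:ℝ) ≤ (2.7182818283:ℝ) ^ 11 := by norm_num
    linarith [he ▸ (this.trans hp)]
  linarith

private lemma ten_loglog_le {x : ℝ} (hx : Real.exp (Real.exp 10) ≤ x) :
    10 * Real.log (Real.log x) ≤ x := by
  have hx0 := xpos hx
  have hlx := log_pos' hx
  have h1 : Real.log (Real.log x) ≤ Real.log x := by
    linarith [Real.log_le_sub_one_of_pos hlx]
  have hs : Real.log x = 2 * Real.log (Real.sqrt x) := by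
    rw [Real.log_sqrt hx0.le]; ring
  have h2 : Real.log (Real.sqrt x) ≤ Real.sqrt x - 1 :=
    Real.log_le_sub_one_of_pos (Real.sqrt_pos.2 hx0)
  have h3 : (20:ℝ) ≤ Real.sqrt x := by
    have := Real.sqrt_le_sqrt (x_ge_400 hx)
    calc (20:ℝ) = Real.sqrt 400 := by
          rw [show (400:ℝ) = 20^2 by norm_num, Real.sqrt_sq]; norm_num
      _ ≤ Real.sqrt x := this
  nlinarith [Real.sq_sqrt hx0.le]

private lemma incr_le {x y : ℝ} (hx : Real.exp (Real.exp 10) ≤ x) (hxy : x ≤ y) :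
    Real.log (Real.log (Real.log y)) - Real.log (Real.log (Real.log x)) ≤
      (y - x) / (x * Real.log x * Real.log (Real.log x)) := by
  have hx0 := xpos hx
  have hlx := log_pos' hx
  have hllx := loglog_pos hx
  have hy : Real.exp (Real.exp 10) ≤ y := hx.trans hxy
  have hly : Real.log x ≤ Real.log y := Real.log_le_log hx0 hxy
  have hlly : Real.log (Real.log x) ≤ Real.log (Real.log y) := Real.log_le_log hlx hly
  have s1 : Real.log y - Real.log x ≤ (y - x) / x := log_sub_log_le hx0 hxy
  have s2 : Real.log (Real.log y) - Real.log (Real.log x) ≤ (Real.log y - Real.log x) / Real.log x :=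
    log_sub_log_le hlx hly
  have s3 : Real.log (Real.log (Real.log y)) - Real.log (Real.log (Real.log x)) ≤
      (Real.log (Real.log y) - Real.log (Real.log x)) / Real.log (Real.log x) :=
    log_sub_log_le hllx hlly
  have t2 : (Real.log y - Real.log x) / Real.log x ≤ ((y - x) / x) / Real.log x :=
    div_le_div_of_nonneg_right s1 hlx.le |>.trans_eq rfl
  have t3 : (Real.log (Real.log y) - Real.log (Real.log x)) / Real.log (Real.log x) ≤
      (((y - x) / x) / Real.log x) / Real.log (Real.log x) :=
    div_le_div_of_nonneg_right (s2.trans t2) hllx.le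
  calc Real.log (Real.log (Real.log y)) - Real.log (Real.log (Real.log x)) ≤
      (((y - x) / x) / Real.log x) / Real.log (Real.log x) := s3.trans t3
    _ = (y - x) / (x * Real.log x * Real.log (Real.log x)) := by ring

private lemma incr_ge {x y : ℝ} (hx : Real.exp (Real.exp 10) ≤ x) (hxy : x ≤ y) :
    (y - x) / (y * Real.log y * Real.log (Real.log y)) ≤
      Real.log (Real.log (Real.log y)) - Real.log (Real.log (Real.log x)) := by
  have hx0 := xpos hx
  have hlx := log_pos' hx
  have hllx := loglog_pos hx
  have hy : Real.exp (Real.exp 10) ≤ y := hx.trans hxy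
  have hy0 := xpos hy
  have hly0 := log_pos' hy
  have hlly0 := loglog_pos hy
  have hly : Real.log x ≤ Real.log y := Real.log_le_log hx0 hxy
  have hlly : Real.log (Real.log x) ≤ Real.log (Real.log y) := Real.log_le_log hlx hly
  have s1 : (y - x) / y ≤ Real.log y - Real.log x := le_log_sub_log hx0 hxy
  have s2 : (Real.log y - Real.log x) / Real.log y ≤
      Real.log (Real.log y) - Real.log (Real.log x) := le_log_sub_log hlx hly
  have s3 : (Real.log (Real.log y) - Real.log (Real.log x)) / Real.log (Real.log y) ≤
      Real.log (Real.log (Real.log y)) - Real.log (Real.log (Real.log x)) :=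
    le_log_sub_log hllx hlly
  have t2 : ((y - x) / y) / Real.log y ≤ (Real.log y - Real.log x) / Real.log y :=
    div_le_div_of_nonneg_right s1 hly0.le
  have t3 : (((y - x) / y) / Real.log y) / Real.log (Real.log y) ≤
      (Real.log (Real.log y) - Real.log (Real.log x)) / Real.log (Real.log y) :=
    div_le_div_of_nonneg_right (t2.trans s2) hlly0.le
  calc (y - x) / (y * Real.log y * Real.log (Real.log y))
      = (((y - x) / y) / Real.log y) / Real.log (Real.log y) := by ring
    _ ≤ _ := t3.trans s3

private lemma step_le {x : ℝ} (hx : Real.exp (Real.exp 10) ≤ x) :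
    Real.log (Real.log (Real.log (x + 10 * Real.log (Real.log x)))) -
      Real.log (Real.log (Real.log x)) ≤ 10 / (x * Real.log x) := by
  have hllx := loglog_pos hx
  have hlx := log_pos' hx
  have hx0 := xpos hx
  have hxy : x ≤ x + 10 * Real.log (Real.log x) := by linarith
  have h := incr_le hx hxy
  have he : (x + 10 * Real.log (Real.log x) - x) / (x * Real.log x * Real.log (Real.log x))
      = 10 / (x * Real.log x) := by
    field_simp
    ring
  linarith [he ▸ h]

private lemma step_ge {x : ℝ} (hx : Real.exp (Real.exp 10) ≤ x) :
    1 / (x * Real.log x) ≤ (4/5) * (Real.log (Real.log (Real.log (x + 10 * Real.log (Real.log x)))) -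
      Real.log (Real.log (Real.log x))) := by
  set y := x + 10 * Real.log (Real.log x) with hy_def
  have hllx := loglog_pos hx
  have hlx := log_pos' hx
  have hx0 := xpos hx
  have hxy : x ≤ y := by simp only [hy_def]; linarith
  have hy : Real.exp (Real.exp 10) ≤ y := hx.trans hxy
  have hy0 := xpos hy
  have hly0 := log_pos' hy
  have hlly0 := loglog_pos hy
  have hy2x : y ≤ 2 * x := by have := ten_loglog_le hx; simp only [hy_def]; linarith
  have hlog2 : Real.log 2 ≤ 1 := by linarith [Real.log_le_sub_one_of_pos (show (0:ℝ) < 2 by norm_num)]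
  have h2lx : Real.log y ≤ 2 * Real.log x := by
    have h1 : Real.log y ≤ Real.log (2 * x) := Real.log_le_log hy0 hy2x
    rw [Real.log_mul (by norm_num) (ne_of_gt hx0)] at h1
    have : (1:ℝ) ≤ Real.log x := le_trans (by linarith [Real.add_one_le_exp (10:ℝ)]) (log_ge hx)
    linarith
  have h2llx : Real.log (Real.log y) ≤ 2 * Real.log (Real.log x) := by
    have h1 : Real.log (Real.log y) ≤ Real.log (2 * Real.log x) := Real.log_le_log hly0 h2lx
    rw [Real.log_mul (by norm_num) (ne_of_gt hlx)] at h1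
    have := loglog_ge hx
    linarith
  have hden : y * Real.log y * Real.log (Real.log y) ≤
      8 * (x * Real.log x * Real.log (Real.log x)) := by
    have h1 : y * Real.log y ≤ (2*x) * (2*Real.log x) :=
      mul_le_mul hy2x h2lx hly0.le (by positivity)
    have h2 : y * Real.log y * Real.log (Real.log y) ≤
        ((2*x) * (2*Real.log x)) * (2*Real.log (Real.log x)) :=
      mul_le_mul h1 h2llx hlly0.le (by positivity)
    linarith [h2]
  have h := incr_ge hx hxy
  have hstep : (10 * Real.log (Real.log x)) / (8 * (x * Real.log x * Real.log (Real.log x))) ≤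
      (y - x) / (y * Real.log y * Real.log (Real.log y)) := by
    have hyx : y - x = 10 * Real.log (Real.log x) := by simp only [hy_def]; ring
    rw [hyx]
    exact div_le_div_of_nonneg_left (by positivity) (mul_pos (mul_pos hy0 hly0) hlly0) hden
  have heq : (10 * Real.log (Real.log x)) / (8 * (x * Real.log x * Real.log (Real.log x)))
      = (5/4) * (1 / (x * Real.log x)) := by
    field_simp
    ring
  have hcomb := (heq ▸ hstep).trans h
  linarith

private lemma fmono {x y : ℝ} (hx : Real.exp (Real.exp 10) ≤ x) (hxy : x ≤ y) :
    Real.log (Real.log (Real.log x)) ≤ Real.log (Real.log (Real.log y)) :=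
  Real.log_le_log (loglog_pos hx) (Real.log_le_log (log_pos' hx) (Real.log_le_log (xpos hx) hxy))

/-- Let `N₁ ≥ e^{e^{10}}` and `N_{k+1} = N_k + 10 log log N_k` for `k ≥ 1`. Then
`N_M → ∞` and
`liminf_{M→∞} (Σ_{k=1}^M 1/(N_k log N_k)) / (log log log N_M) ≥ 1/10`. -/
theorem recursive_sequence_liminf (N : ℕ → ℝ)
    (hinit : Real.exp (Real.exp 10) ≤ N 1)
    (hrec : ∀ k : ℕ, 1 ≤ k → N (k + 1) = N k + 10 * Real.log (Real.log (N k))) :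
    Tendsto N atTop atTop ∧
      (1 / 10 : ℝ) ≤ atTop.liminf fun M : ℕ =>
        (∑ k ∈ Finset.Icc 1 M, 1 / (N k * Real.log (N k))) /
          Real.log (Real.log (Real.log (N M))) := by
  -- N k ≥ E for k ≥ 1
  have hNE : ∀ k : ℕ, 1 ≤ k → Real.exp (Real.exp 10) ≤ N k := by
    intro k hk
    induction k, hk using Nat.le_induction with
    | base => exact hinit
    | succ n hn ih =>
      rw [hrec n hn]
      have := loglog_pos ih
      linarith
  -- growth
  have hgrow : ∀ k : ℕ, N 1 + 100 * k ≤ N (k + 1) := by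
    intro k
    induction k with
    | zero => simp
    | succ n ih =>
      have h1 : 1 ≤ n + 1 := Nat.le_add_left 1 n
      rw [hrec (n + 1) h1]
      have := loglog_ge (hNE (n + 1) h1)
      push_cast
      push_cast at ih
      linarith
  have htend : Tendsto N atTop atTop := by
    rw [← Filter.tendsto_add_atTop_iff_nat 1]
    apply tendsto_atTop_mono hgrow
    apply tendsto_atTop_add_const_left
    exact (tendsto_natCast_atTop_atTop (R := ℝ)).const_mul_atTop (by norm_num)
  refine ⟨htend, ?_⟩
  set f : ℝ → ℝ := fun x => Real.log (Real.log (Real.log x)) with hf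
  set g : ℕ → ℝ := fun k => 1 / (N k * Real.log (N k)) with hg
  -- telescope bounds
  have hsumlow : ∀ M : ℕ, f (N (M + 1)) - f (N 1) ≤ 10 * ∑ k ∈ Finset.Icc 1 M, g k := by
    intro M
    induction M with
    | zero => simp
    | succ n ih =>
      rw [Finset.sum_Icc_succ_top (Nat.le_add_left 1 n)]
      have h1 : 1 ≤ n + 1 := Nat.le_add_left 1 n
      have hstep : f (N (n + 2)) - f (N (n + 1)) ≤ 10 * g (n + 1) := by
        have := step_le (hNE (n + 1) h1)
        rw [← hrec (n + 1) h1] at this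
        simp only [hf, hg]
        rw [mul_one_div]
        convert this using 2
      have := ih
      simp only [mul_add]
      linarith
  have hsumhigh : ∀ M : ℕ, ∑ k ∈ Finset.Icc 1 M, g k ≤ (4/5) * (f (N (M + 1)) - f (N 1)) := by
    intro M
    induction M with
    | zero => simp
    | succ n ih =>
      rw [Finset.sum_Icc_succ_top (Nat.le_add_left 1 n)]
      have h1 : 1 ≤ n + 1 := Nat.le_add_left 1 n
      have hstep : g (n + 1) ≤ (4/5) * (f (N (n + 2)) - f (N (n + 1))) := by
        have := step_ge (hNE (n + 1) h1)
        rw [← hrec (n + 1) h1] at this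
        simpa only [hf, hg] using this
      linarith
  -- f (N M) tends to atTop
  have hftend : Tendsto (fun M => f (N M)) atTop atTop :=
    (Real.tendsto_log_atTop.comp (Real.tendsto_log_atTop.comp
      (Real.tendsto_log_atTop.comp htend)))
  -- the lower-bound sequence
  set b : ℕ → ℝ := fun M => (1 - f (N 1) / f (N M)) / 10 with hb
  have hbtend : Tendsto b atTop (nhds (1/10 : ℝ)) := by
    have h0 : Tendsto (fun M => f (N 1) / f (N M)) atTop (nhds 0) :=
      Tendsto.div_atTop tendsto_const_nhds hftend
    have := (((tendsto_const_nhds (x := (1:ℝ))).sub h0).div_const 10)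
    simpa using this
  -- eventual comparison: b M ≤ v M for M ≥ 1
  have hcomp : ∀ᶠ M : ℕ in atTop, b M ≤
      (∑ k ∈ Finset.Icc 1 M, g k) / f (N M) := by
    filter_upwards [eventually_ge_atTop 1] with M hM
    have hE : Real.exp (Real.exp 10) ≤ N M := hNE M hM
    have hfM : 2 ≤ f (N M) := lll_ge hE
    have hfM0 : 0 < f (N M) := by linarith
    have hmonoN : N M ≤ N (M + 1) := by
      rw [hrec M hM]; have := loglog_pos hE; linarith
    have h1 : f (N M) - f (N 1) ≤ 10 * ∑ k ∈ Finset.Icc 1 M, g k := by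
      have := hsumlow M
      have := fmono hE hmonoN
      simp only [hf] at *
      linarith
    rw [hb, div_le_div_iff₀ (by norm_num) hfM0]
    have hfeq : (1 - f (N 1) / f (N M)) * f (N M) = f (N M) - f (N 1) := by
      field_simp
    calc (1 - f (N 1) / f (N M)) * f (N M) = f (N M) - f (N 1) := hfeq
      _ ≤ 10 * ∑ k ∈ Finset.Icc 1 M, g k := h1
      _ = (∑ k ∈ Finset.Icc 1 M, g k) * 10 := by ring
  -- eventual upper bound: v M ≤ 2
  have hupper : ∀ᶠ M : ℕ in atTop, (∑ k ∈ Finset.Icc 1 M, g k) / f (N M) ≤ 2 := by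
    filter_upwards [eventually_ge_atTop 1] with M hM
    have hE : Real.exp (Real.exp 10) ≤ N M := hNE M hM
    have hfM : 2 ≤ f (N M) := lll_ge hE
    have hfM0 : 0 < f (N M) := by linarith
    have hf1 : 2 ≤ f (N 1) := lll_ge hinit
    have hfM1 : f (N (M + 1)) ≤ 1 + f (N M) := by
      have hx0 := xpos hE
      have hlx := log_pos' hE
      have hllx := loglog_pos hE
      have hy2x : N (M + 1) ≤ 2 * N M := by
        rw [hrec M hM]; have := ten_loglog_le hE; linarith
      have hyE : Real.exp (Real.exp 10) ≤ N (M + 1) := hNE (M + 1) (Nat.le_add_left 1 M)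
      have hlog2 : Real.log 2 ≤ 1 := by
        linarith [Real.log_le_sub_one_of_pos (show (0:ℝ) < 2 by norm_num)]
      have h1 : Real.log (N (M + 1)) ≤ 2 * Real.log (N M) := by
        have := Real.log_le_log (xpos hyE) hy2x
        rw [Real.log_mul (by norm_num) (ne_of_gt hx0)] at this
        have h11 : (1:ℝ) ≤ Real.log (N M) :=
          le_trans (by linarith [Real.add_one_le_exp (10:ℝ)]) (log_ge hE)
        linarith
      have h2 : Real.log (Real.log (N (M + 1))) ≤ 2 * Real.log (Real.log (N M)) := by
        have := Real.log_le_log (log_pos' hyE) h1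
        rw [Real.log_mul (by norm_num) (ne_of_gt hlx)] at this
        have := loglog_ge hE
        linarith
      have h3 : f (N (M + 1)) ≤ Real.log (2 * Real.log (Real.log (N M))) := by
        simp only [hf]
        exact Real.log_le_log (loglog_pos hyE) h2
      rw [Real.log_mul (by norm_num) (ne_of_gt hllx)] at h3
      simp only [hf] at *
      linarith
    have hS : ∑ k ∈ Finset.Icc 1 M, g k ≤ (4/5) * (1 + f (N M)) := by
      have := hsumhigh M
      nlinarith
    rw [div_le_iff₀ hfM0]
    nlinarith
  -- conclude
  have hlb : (1/10 : ℝ) = atTop.liminf b := (hbtend.liminf_eq).symm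
  rw [hlb]
  exact Filter.liminf_le_liminf hcomp hbtend.isBoundedUnder_ge
    (Filter.isCoboundedUnder_ge_of_eventually_le atTop hupper)
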